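/- Let S be a set of n points in ℝ² with distinct x-coordinates and let T(S) be the interval tree on S. Every edge of the upper hull H_U(S) spans at least one internal node of T(S), and distinct upper-hull edges are stored at distinct nodes when each edge is stored at the highest node it spans. Consequently, the number of full nodes of T(S) equals the number of edges of H_U(S). -/

import Mathlib

/-- If two elements of an interval `(a, b]` both maximize the 2-adic valuation
over that interval, they are equal. -/
lemma max_val_unique_aux {a b g g' : ℕ}
    (hg1 : a < g) (hg'2 : g' ≤ b)
    (hmax : ∀ x, a < x → x ≤ b → padicValNat 2 x ≤ padicValNat 2 g)
    (hval : padicValNat 2 g' = padicValNat 2 g)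
    (hlt : g < g') : False := by
  set m := padicValNat 2 g with hm
  have hg0 : g ≠ 0 := by omega
  have hg'0 : g' ≠ 0 := by omega
  have hdvd : 2 ^ m ∣ g := pow_padicValNat_dvd
  have hdvd' : 2 ^ m ∣ g' := hval ▸ (pow_padicValNat_dvd (p := 2) (n := g'))
  obtain ⟨c, hc⟩ := hdvd
  obtain ⟨d, hd⟩ := hdvd'
  have hpow : 0 < 2 ^ m := Nat.pow_pos (by norm_num)
  have hcd : c < d := by
    by_contra hcon
    push_neg at hcon
    have : g' ≤ g := by
      rw [hc, hd]; exact Nat.mul_le_mul_left _ hcon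
    omega
  have hcodd : ¬ 2 ∣ c := by
    intro ⟨e, he⟩
    have : 2 ^ (m + 1) ∣ g := ⟨e, by rw [hc, he]; ring⟩
    exact pow_succ_padicValNat_not_dvd (p := 2) hg0 this
  -- c is odd, so c + 1 is even and c + 1 ≤ d
  have hc1 : c + 1 ≤ d := hcd
  obtain ⟨e, he⟩ : 2 ∣ (c + 1) := by omega
  set g'' := 2 ^ m * (c + 1) with hG
  have hG0 : g'' ≠ 0 := by positivity
  have hGdvd : 2 ^ (m + 1) ∣ g'' := ⟨e, by rw [hG, he]; ring⟩
  have hGval : m + 1 ≤ padicValNat 2 g'' :=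
    (padicValNat_dvd_iff_le hG0).mp hGdvd
  have h1 : g < g'' := by
    rw [hc, hG]; exact Nat.mul_lt_mul_of_le_of_lt le_rfl (by omega) hpow
  have h2 : g'' ≤ g' := by
    rw [hd, hG]; exact Nat.mul_le_mul_left _ hc1
  have := hmax g'' (by omega) (by omega)
  omega

lemma max_val_unique {a b g g' : ℕ}
    (hg1 : a < g) (hg2 : g ≤ b) (hg'1 : a < g') (hg'2 : g' ≤ b)
    (hmax : ∀ x, a < x → x ≤ b → padicValNat 2 x ≤ padicValNat 2 g)
    (hmax' : ∀ x, a < x → x ≤ b → padicValNat 2 x ≤ padicValNat 2 g') :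
    g = g' := by
  have hval : padicValNat 2 g' = padicValNat 2 g :=
    le_antisymm (hmax g' hg'1 hg'2) (hmax' g hg1 hg2)
  rcases lt_trichotomy g g' with hlt | heq | hgt
  · exact absurd (max_val_unique_aux hg1 hg'2 hmax hval hlt) (by simp)
  · exact heq
  · exact absurd (max_val_unique_aux hg'1 hg2 hmax' hval.symm hgt) (by simp)

/-- In the dyadic encoding of the complete binary interval tree on `2^h` leaves
(internal nodes ↔ gaps `g` between consecutive leaves, heights ↔ 2-adic
valuations, an edge joining leaves `v i < v (i+1)` spans `g` iff
`v i < g ≤ v (i+1)`, and each upper-hull edge `i` is stored at the highest gap it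
spans): every hull edge spans at least one internal node, and — the upper-hull
edges being given by vertex indices `v 0 = 0 < v 1 < ⋯ < v t = 2^h - 1` — the set
of full nodes is finite with exactly `t` elements, one per hull edge. -/
theorem full_nodes_count_eq_hull_edges (h t : ℕ) (ht : 1 ≤ t)
    (v : Fin (t + 1) → ℕ)
    (hmono : StrictMono v) (h0 : v 0 = 0) (hlast : v (Fin.last t) = 2 ^ h - 1)
    (Full : ℕ → Prop)
    (hFull : ∀ g, Full g ↔ ∃ i : Fin t, v i.castSucc < g ∧ g ≤ v i.succ ∧
        ∀ g', v i.castSucc < g' → g' ≤ v i.succ →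
          padicValNat 2 g' ≤ padicValNat 2 g) :
    (∀ i : Fin t, ∃ g, v i.castSucc < g ∧ g ≤ v i.succ) ∧
    {g | Full g}.Finite ∧ {g | Full g}.ncard = t := by
  have hne : ∀ i : Fin t, v i.castSucc < v i.succ :=
    fun i => hmono (Fin.castSucc_lt_succ (i := i))
  -- existence of a maximizer in each gap interval
  have hex : ∀ i : Fin t, ∃ g, v i.castSucc < g ∧ g ≤ v i.succ ∧
      ∀ g', v i.castSucc < g' → g' ≤ v i.succ →
        padicValNat 2 g' ≤ padicValNat 2 g := by
    intro i
    obtain ⟨g, hg, hmax⟩ := Finset.exists_max_image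
      (Finset.Ioc (v i.castSucc) (v i.succ)) (padicValNat 2)
      ⟨v i.succ, Finset.mem_Ioc.mpr ⟨hne i, le_rfl⟩⟩
    rw [Finset.mem_Ioc] at hg
    exact ⟨g, hg.1, hg.2, fun g' h1 h2 => hmax g' (Finset.mem_Ioc.mpr ⟨h1, h2⟩)⟩
  choose f hf1 hf2 hf3 using hex
  have hset : {g | Full g} = Set.range f := by
    ext g
    simp only [Set.mem_setOf_eq, hFull, Set.mem_range]
    constructor
    · rintro ⟨i, h1, h2, h3⟩
      exact ⟨i, max_val_unique (hf1 i) (hf2 i) h1 h2 (hf3 i) h3⟩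
    · rintro ⟨i, rfl⟩
      exact ⟨i, hf1 i, hf2 i, hf3 i⟩
  have hinj : Function.Injective f := by
    intro i j hij
    by_contra hne'
    wlog hlt : i < j generalizing i j
    · exact this hij.symm (Ne.symm hne') (by omega)
    have hle : v i.succ ≤ v j.castSucc :=
      hmono.monotone (Fin.succ_le_castSucc_iff.mpr hlt)
    have := hf2 i
    have := hf1 j
    omega
  refine ⟨fun i => ⟨v i.succ, hne i, le_rfl⟩, ?_, ?_⟩
  · rw [hset]; exact Set.finite_range f
  · rw [hset, ← Set.image_univ, Set.ncard_image_of_injective _ hinj,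
      Set.ncard_univ, Nat.card_eq_fintype_card, Fintype.card_fin]
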